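/- Every finite simple graph G contains a set S ⊆ V(G) such that every connected component of G − S is factor-critical, and such that there is a matching in G matching the vertices of S to vertices lying in pairwise distinct components of G − S. -/

import Mathlib

open SimpleGraph

set_option linter.unusedSectionVars false
set_option linter.unusedVariables false
set_option maxHeartbeats 1600000

namespace GE

variable {V : Type*} [Fintype V] {G : SimpleGraph V}

/-- one step of adjacency inside the set `A` -/
def Rel (G : SimpleGraph V) (A : Set V) (a b : V) : Prop := a ∈ A ∧ b ∈ A ∧ G.Adj a b

/-- the connected component of `v` inside `A` -/
def comp (G : SimpleGraph V) (A : Set V) (v : V) : Set V :=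
  {w | Relation.ReflTransGen (Rel G A) v w}

def IsComp (G : SimpleGraph V) (A : Set V) (K : Set V) : Prop := ∃ v ∈ A, K = comp G A v

lemma rel_symm {A : Set V} : Symmetric (Rel G A) := fun _ _ ⟨ha, hb, h⟩ => ⟨hb, ha, h.symm⟩

lemma reach_symm {A : Set V} {a b : V} (h : Relation.ReflTransGen (Rel G A) a b) :
    Relation.ReflTransGen (Rel G A) b a := by
  haveI : Std.Symm (Rel G A) := ⟨fun _ _ h => rel_symm h⟩
  exact @Std.Symm.symm _ _ Relation.ReflTransGen.symmetric _ _ h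

lemma mem_comp_self (A : Set V) (v : V) : v ∈ comp G A v := Relation.ReflTransGen.refl

lemma comp_subset {A : Set V} {v : V} (hv : v ∈ A) : comp G A v ⊆ A := by
  intro w hw
  induction hw with
  | refl => exact hv
  | tail _ h _ => exact h.2.1

lemma comp_eq_of_mem {A : Set V} {v w : V} (h : w ∈ comp G A v) : comp G A w = comp G A v := by
  ext x
  constructor
  · intro hx; exact Relation.ReflTransGen.trans h hx
  · intro hx; exact Relation.ReflTransGen.trans (reach_symm h) hx

lemma mem_comp_of_adj {A : Set V} {v w : V} (hv : v ∈ A) (hw : w ∈ A) (h : G.Adj v w) :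
    w ∈ comp G A v := Relation.ReflTransGen.single ⟨hv, hw, h⟩

lemma comp_mono {A B : Set V} (h : A ⊆ B) (v : V) : comp G A v ⊆ comp G B v := by
  intro w hw
  exact Relation.ReflTransGen.mono (r := Rel G A) (p := Rel G B) (fun a b ⟨ha, hb, hadj⟩ => ⟨h ha, h hb, hadj⟩) _ _ hw

/-- closure lemma: if the component of `v` in `A'` is closed under adjacency within `B ⊇ A'`,
then it is also the component of `v` in `B`. -/
lemma comp_eq_of_closed {A' B : Set V} {v : V} (hAB : A' ⊆ B)
    (hcl : ∀ x ∈ comp G A' v, ∀ y ∈ B, G.Adj x y → y ∈ comp G A' v) :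
    comp G B v = comp G A' v := by
  apply Set.Subset.antisymm _ (comp_mono hAB v)
  intro w hw
  induction hw with
  | refl => exact mem_comp_self A' v
  | tail _ h ih => exact hcl _ ih _ h.2.1 h.2.2

lemma comps_disjoint {A : Set V} {v w x : V} (hx : x ∈ comp G A v) (hx' : x ∈ comp G A w) :
    comp G A v = comp G A w := by
  rw [← comp_eq_of_mem hx, ← comp_eq_of_mem hx']

lemma IsComp.subset {A K : Set V} (h : IsComp G A K) : K ⊆ A := by
  obtain ⟨v, hv, rfl⟩ := h; exact comp_subset hv

lemma IsComp.nonempty {A K : Set V} (h : IsComp G A K) : K.Nonempty := by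
  obtain ⟨v, hv, rfl⟩ := h; exact ⟨v, mem_comp_self A v⟩

lemma IsComp.comp_eq {A K : Set V} (h : IsComp G A K) {w : V} (hw : w ∈ K) :
    comp G A w = K := by
  obtain ⟨v, hv, rfl⟩ := h; exact comp_eq_of_mem hw

lemma comp_sdiff_eq_of_not_mem {A K T : Set V} (hK : IsComp G A K) (hT : T ⊆ K)
    {w : V} (hw : w ∈ A \ T) (hwK : w ∉ K) : comp G (A \ T) w = comp G A w := by
  have hdis : Disjoint (comp G A w) K := by
    rw [Set.disjoint_left]
    intro x hx hxK
    exact hwK (by rw [← hK.comp_eq hxK]; exact comp_eq_of_mem hx ▸ mem_comp_self A w)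
  symm
  apply comp_eq_of_closed (Set.diff_subset)
  intro x hx y hy hadj
  have hxA : x ∈ A := comp_subset hw.1 (comp_mono Set.diff_subset w hx)
  have hyA : y ∈ A := hy
  have hyc : y ∈ comp G A w := by
    have : y ∈ comp G A x := mem_comp_of_adj hxA hyA hadj
    have hxc : x ∈ comp G A w := comp_mono Set.diff_subset w hx
    rw [comp_eq_of_mem hxc] at this
    exact this
  have hyT : y ∉ T := fun h => (Set.disjoint_left.mp hdis hyc) (hT h)
  -- now y ∈ A \ T, adjacent to x ∈ comp (A\T) w
  have hxAT : x ∈ A \ T := comp_subset hw (hx)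
  have : y ∈ comp G (A \ T) x := mem_comp_of_adj hxAT ⟨hyA, hyT⟩ hadj
  rw [comp_eq_of_mem hx] at this
  exact this

lemma comp_sdiff_eq_of_mem {A K T : Set V} (hK : IsComp G A K) (hT : T ⊆ K)
    {w : V} (hw : w ∈ A \ T) (hwK : w ∈ K) : comp G (A \ T) w = comp G (K \ T) w := by
  apply comp_eq_of_closed (Set.diff_subset_diff_left hK.subset)
  intro x hx y hy hadj
  have hxK : x ∈ K \ T := comp_subset ((Set.mem_diff w).mpr ⟨hwK, hw.2⟩) hx
  have hyK : y ∈ K := by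
    have : y ∈ comp G A x := mem_comp_of_adj (hK.subset hxK.1) hy.1 hadj
    rw [hK.comp_eq hxK.1] at this; exact this
  have : y ∈ comp G (K \ T) x := mem_comp_of_adj hxK ⟨hyK, hy.2⟩ hadj
  rw [comp_eq_of_mem hx] at this
  exact this

lemma isComp_sdiff_iff {A K T : Set V} (hK : IsComp G A K) (hT : T ⊆ K) (K' : Set V) :
    IsComp G (A \ T) K' ↔ ((IsComp G A K' ∧ K' ≠ K) ∨ IsComp G (K \ T) K') := by
  constructor
  · rintro ⟨w, hw, rfl⟩
    by_cases hwK : w ∈ K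
    · right
      exact ⟨w, ⟨hwK, hw.2⟩, comp_sdiff_eq_of_mem hK hT hw hwK⟩
    · left
      refine ⟨⟨w, hw.1, comp_sdiff_eq_of_not_mem hK hT hw hwK⟩, ?_⟩
      intro h
      exact hwK (h ▸ mem_comp_self (A \ T) w)
  · rintro (⟨⟨w, hw, rfl⟩, hne⟩ | ⟨w, hw, rfl⟩)
    · have hwK : w ∉ K := fun h => hne (hK.comp_eq h)
      have hwT : w ∉ T := fun h => hwK (hT h)
      exact ⟨w, ⟨hw, hwT⟩, (comp_sdiff_eq_of_not_mem hK hT ⟨hw, hwT⟩ hwK).symm⟩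
    · have hwA : w ∈ A \ T := ⟨hK.subset hw.1, hw.2⟩
      exact ⟨w, hwA, (comp_sdiff_eq_of_mem hK hT hwA hw.1).symm⟩
lemma IsComp.disjoint {A K K' : Set V} (h : IsComp G A K) (h' : IsComp G A K') (hne : K ≠ K') :
    Disjoint K K' := by
  rw [Set.disjoint_left]
  intro x hx hx'
  exact hne ((h.comp_eq hx).symm.trans (h'.comp_eq hx'))

variable (G) in
noncomputable def q (A : Set V) : ℕ := {K : Set V | IsComp G A K ∧ Odd K.ncard}.ncard

lemma isComp_empty (K : Set V) : ¬ IsComp G ∅ K := by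
  rintro ⟨v, hv, -⟩; exact hv

lemma q_empty : q G (∅ : Set V) = 0 := by
  have : {K : Set V | IsComp G ∅ K ∧ Odd K.ncard} = ∅ := by
    ext K; simp [isComp_empty]
  rw [q, this, Set.ncard_empty]

lemma q_sdiff {A K T : Set V} (hK : IsComp G A K) (hT : T ⊆ K) :
    q G (A \ T) = (q G A - (if Odd K.ncard then 1 else 0)) + q G (K \ T) := by
  have hset : {K' : Set V | IsComp G (A \ T) K' ∧ Odd K'.ncard} =
      ({K' : Set V | IsComp G A K' ∧ Odd K'.ncard} \ {K}) ∪
      {K' : Set V | IsComp G (K \ T) K' ∧ Odd K'.ncard} := by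
    ext K'
    simp only [Set.mem_setOf_eq, Set.mem_union, Set.mem_diff, Set.mem_singleton_iff,
      isComp_sdiff_iff hK hT]
    tauto
  have hdisj : Disjoint ({K' : Set V | IsComp G A K' ∧ Odd K'.ncard} \ {K})
      {K' : Set V | IsComp G (K \ T) K' ∧ Odd K'.ncard} := by
    rw [Set.disjoint_left]
    rintro K' ⟨⟨h1, -⟩, hne⟩ ⟨h2, -⟩
    obtain ⟨x, hx⟩ := h2.nonempty
    have hxK : x ∈ K := (h2.subset hx).1
    have := (hK.disjoint h1 (fun h => hne (Set.mem_singleton_iff.mpr h.symm)))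
    exact (Set.disjoint_left.mp this hxK) hx
  rw [q, hset, Set.ncard_union_eq hdisj (Set.toFinite _) (Set.toFinite _)]
  congr 1
  by_cases hodd : Odd K.ncard
  · rw [if_pos hodd, Set.ncard_diff_singleton_of_mem
      (show K ∈ {K' : Set V | IsComp G A K' ∧ Odd K'.ncard} from ⟨hK, hodd⟩)]
    rfl
  · rw [if_neg hodd]
    rw [Nat.sub_zero]
    rw [show ({K' : Set V | IsComp G A K' ∧ Odd K'.ncard} \ {K}) =
      {K' : Set V | IsComp G A K' ∧ Odd K'.ncard} from
      Set.diff_singleton_eq_self (fun h => hodd h.2)]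
    rfl

lemma q_pos_of_odd_comp {A K : Set V} (hK : IsComp G A K) (hodd : Odd K.ncard) :
    1 ≤ q G A := by
  rw [q]
  exact (Set.ncard_pos (Set.toFinite _)).mpr ⟨K, hK, hodd⟩

lemma parity_q (A : Set V) : Even (A.ncard + q G A) := by
  generalize hn : A.ncard = n
  induction n using Nat.strong_induction_on generalizing A with
  | _ n ih =>
    rcases Set.eq_empty_or_nonempty A with rfl | ⟨v, hv⟩
    · simp [q_empty, ← hn]
    · have hK : IsComp G A (comp G A v) := ⟨v, hv, rfl⟩
      set K := comp G A v with hKdef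
      have hsplit := q_sdiff (T := K) hK (le_refl K)
      rw [Set.diff_self, q_empty, Nat.add_zero] at hsplit
      have hKsub : K ⊆ A := hK.subset
      have hKcard : 1 ≤ K.ncard := (Set.ncard_pos (Set.toFinite _)).mpr hK.nonempty
      have hAcard : K.ncard ≤ A.ncard := Set.ncard_le_ncard hKsub (Set.toFinite _)
      have hdiffcard : (A \ K).ncard = A.ncard - K.ncard := Set.ncard_diff hKsub (Set.toFinite _)
      have ihh : Even ((A \ K).ncard + q G (A \ K)) := by
        apply ih ((A \ K).ncard) _ _ rfl
        omega
      by_cases hodd : Odd K.ncard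
      · rw [if_pos hodd] at hsplit
        have hq1 : 1 ≤ q G A := q_pos_of_odd_comp hK hodd
        rw [Nat.odd_iff] at hodd
        rw [Nat.even_iff] at ihh ⊢
        omega
      · rw [if_neg hodd] at hsplit
        rw [Nat.odd_iff] at hodd
        rw [Nat.even_iff] at ihh ⊢
        omega

lemma exists_odd_comp {A : Set V} (h : Odd A.ncard) : 1 ≤ q G A := by
  have := parity_q (G := G) A
  rw [Nat.even_iff] at this
  rw [Nat.odd_iff] at h
  by_contra hq
  omega
lemma combine {S' A : Set V} (hdisj : Disjoint S' A) (g : V → V)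
    (hg : ∀ s ∈ S', G.Adj s (g s) ∧ g s ∈ A)
    (hginj : ∀ s ∈ S', ∀ t ∈ S', comp G A (g s) = comp G A (g t) → s = t)
    (hsurj : ∀ K, IsComp G A K → ∃ s ∈ S', comp G A (g s) = K)
    (hFC : ∀ K, IsComp G A K → ∀ v ∈ K, ∃ M : G.Subgraph, M.IsMatching ∧ M.verts = K \ {v}) :
    ∃ M : G.Subgraph, M.IsMatching ∧ M.verts = S' ∪ A := by
  classical
  have hKcomp : ∀ i : ↥S', IsComp G A (comp G A (g ↑i)) := fun i => ⟨g ↑i, (hg ↑i i.2).2, rfl⟩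
  choose Mi hMi hMiverts using fun i : ↥S' =>
    hFC (comp G A (g ↑i)) (hKcomp i) (g ↑i) (mem_comp_self A (g ↑i))
  let W : ↥S' → G.Subgraph := fun i => G.subgraphOfAdj (hg ↑i i.2).1 ⊔ Mi i
  have hWmatch : ∀ i, (W i).IsMatching := by
    intro i
    apply (Subgraph.IsMatching.subgraphOfAdj (hg ↑i i.2).1).sup (hMi i)
    rw [support_subgraphOfAdj, (hMi i).support_eq_verts, hMiverts i]
    rw [Set.disjoint_left]
    intro x hx
    simp only [Set.mem_insert_iff, Set.mem_singleton_iff] at hx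
    rcases hx with rfl | rfl
    · exact fun hx => Set.disjoint_left.mp hdisj i.2 (((hKcomp i).subset) hx.1)
    · exact fun hx => hx.2 rfl
  have hWverts : ∀ i, (W i).verts = {(i : V)} ∪ comp G A (g ↑i) := by
    intro i
    show (G.subgraphOfAdj (hg ↑i i.2).1).verts ∪ (Mi i).verts = _
    rw [subgraphOfAdj_verts, hMiverts i]
    ext x
    simp only [Set.mem_union, Set.mem_insert_iff, Set.mem_singleton_iff, Set.mem_diff]
    constructor
    · rintro ((rfl | rfl) | ⟨h1, h2⟩)
      · exact Or.inl rfl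
      · exact Or.inr (mem_comp_self A (g ↑i))
      · exact Or.inr h1
    · rintro (rfl | h)
      · exact Or.inl (Or.inl rfl)
      · by_cases hx : x = g ↑i
        · exact Or.inl (Or.inr hx)
        · exact Or.inr ⟨h, hx⟩
  have hpair : Pairwise fun i j => Disjoint (W i).support (W j).support := by
    intro i j hij
    rw [(hWmatch i).support_eq_verts, (hWmatch j).support_eq_verts, hWverts i, hWverts j]
    have hKne : comp G A (g ↑i) ≠ comp G A (g ↑j) := by
      intro h
      exact hij (Subtype.ext (hginj ↑i i.2 ↑j j.2 h))
    have hKdisj := (hKcomp i).disjoint (hKcomp j) hKne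
    have hiS : (i : V) ∉ A := fun h => Set.disjoint_left.mp hdisj i.2 h
    have hjS : (j : V) ∉ A := fun h => Set.disjoint_left.mp hdisj j.2 h
    rw [Set.disjoint_left]
    intro x hx hx'
    simp only [Set.mem_union, Set.mem_singleton_iff] at hx hx'
    rcases hx with rfl | hx <;> rcases hx' with h' | hx'
    · exact hij (Subtype.ext h')
    · exact hiS ((hKcomp j).subset hx')
    · exact hjS (h' ▸ (hKcomp i).subset hx)
    · exact Set.disjoint_left.mp hKdisj hx hx'
  refine ⟨⨆ i, W i, Subgraph.IsMatching.iSup hWmatch hpair, ?_⟩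
  rw [Subgraph.verts_iSup]
  ext x
  simp only [Set.mem_iUnion, Set.mem_union]
  constructor
  · rintro ⟨i, hi⟩
    rw [hWverts i] at hi
    simp only [Set.mem_union, Set.mem_singleton_iff] at hi
    rcases hi with rfl | h
    · exact Or.inl i.2
    · exact Or.inr ((hKcomp i).subset h)
  · rintro (hx | hx)
    · exact ⟨⟨x, hx⟩, by rw [hWverts ⟨x, hx⟩]; exact Set.mem_union_left _ rfl⟩
    · obtain ⟨s, hs, hcomp⟩ := hsurj (comp G A x) ⟨x, hx, rfl⟩
      exact ⟨⟨s, hs⟩, by rw [hWverts ⟨s, hs⟩]; exact Set.mem_union_right _ (hcomp ▸ mem_comp_self A x)⟩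
theorem relMain (n : ℕ) (U : Set V) (hU : U.ncard ≤ n) :
    ∃ S : Set V, S ⊆ U ∧
      (∀ K, IsComp G (U \ S) K → ∀ v ∈ K, ∃ M : G.Subgraph, M.IsMatching ∧ M.verts = K \ {v}) ∧
      ∃ g : V → V, (∀ s ∈ S, G.Adj s (g s) ∧ g s ∈ U \ S) ∧
        (∀ s ∈ S, ∀ t ∈ S, comp G (U \ S) (g s) = comp G (U \ S) (g t) → s = t) := by
  classical
  induction n using Nat.strong_induction_on generalizing U with
  | _ n ih =>
  set N : ℕ := Fintype.card V with hN
  set defect : Set V → ℤ := fun T => (q G (U \ T) : ℤ) - T.ncard with hdefect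
  set φ : Set V → ℤ := fun T => (2 * N + 1) * defect T + T.ncard with hφ
  obtain ⟨S, hSU, hSmax⟩ : ∃ S ∈ {T : Set V | T ⊆ U}, ∀ T ∈ {T : Set V | T ⊆ U}, φ T ≤ φ S :=
    Set.exists_max_image {T : Set V | T ⊆ U} φ (Set.toFinite _) ⟨∅, Set.empty_subset U⟩
  simp only [Set.mem_setOf_eq] at hSU hSmax
  have hcard : ∀ T : Set V, T.ncard ≤ N := fun T => by
    simpa [Set.ncard_univ, Nat.card_eq_fintype_card] using
      Set.ncard_le_ncard (Set.subset_univ T) (Set.toFinite _)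
  have key : ∀ T : Set V, T ⊆ U → defect S ≤ defect T →
      (S.ncard < T.ncard ∨ defect S < defect T) → False := by
    intro T hTU hdle hor
    have hφT := hSmax T hTU
    have h1 : (T.ncard : ℤ) ≤ N := by exact_mod_cast hcard T
    have h2 : (S.ncard : ℤ) ≤ N := by exact_mod_cast hcard S
    rw [hφ] at hφT
    simp only at hφT
    rcases hor with h | h
    · have : (S.ncard : ℤ) < T.ncard := by exact_mod_cast h
      nlinarith [hφT, hdle, this]
    · have : defect S + 1 ≤ defect T := h
      nlinarith [hφT, this, h1, h2]
  -- Claim 1 : all components odd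
  have hodd : ∀ K, IsComp G (U \ S) K → Odd K.ncard := by
    intro K hK
    by_contra heven
    obtain ⟨c, hc⟩ := hK.nonempty
    have hcUS : c ∈ U \ S := hK.subset hc
    set T : Set V := S ∪ {c} with hT
    have hTU : T ⊆ U := Set.union_subset hSU (by simpa using hcUS.1)
    have hUT : U \ T = (U \ S) \ {c} := by rw [hT, ← Set.diff_diff]
    have hq := q_sdiff (T := {c}) hK (Set.singleton_subset_iff.mpr hc)
    rw [if_neg heven, Nat.sub_zero] at hq
    have hK1 : 1 ≤ K.ncard := (Set.ncard_pos (Set.toFinite _)).mpr hK.nonempty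
    have hKodd : Odd (K \ {c}).ncard := by
      rw [Set.ncard_diff_singleton_of_mem hc]
      rw [Nat.odd_iff]
      rw [Nat.odd_iff] at heven
      omega
    have hq1 : 1 ≤ q G (K \ {c}) := exists_odd_comp hKodd
    have hTcard : T.ncard = S.ncard + 1 := by
      rw [hT, Set.union_singleton, Set.ncard_insert_of_notMem hcUS.2]
    apply key T hTU
    · rw [hdefect]
      simp only
      rw [hUT, hq, hTcard]
      push_cast
      omega
    · left; omega
  -- Claim 2 : factor-criticality of all components
  have hFC : ∀ K, IsComp G (U \ S) K → ∀ v ∈ K,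
      ∃ M : G.Subgraph, M.IsMatching ∧ M.verts = K \ {v} := by
    by_contra hcon
    push_neg at hcon
    obtain ⟨K, hK, v, hv, hno⟩ := hcon
    have hvU : v ∈ U := (hK.subset hv).1
    set U' : Set V := K \ {v} with hU'
    have hU'U : U' ⊆ U := fun x hx => (hK.subset hx.1).1
    have hU'lt : U'.ncard < n := by
      have : U' ⊂ U := ⟨hU'U, fun hsub => (hsub hvU).2 rfl⟩
      exact lt_of_lt_of_le (Set.ncard_lt_ncard this (Set.toFinite _)) hU
    obtain ⟨S', hS'U', hFC', g', hg', hg'inj⟩ := ih U'.ncard hU'lt U' le_rfl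
    set A : Set V := U' \ S' with hA
    by_cases hsurj : ∀ K', IsComp G A K' → ∃ s ∈ S', comp G A (g' s) = K'
    · have hdisj : Disjoint S' A := Set.disjoint_sdiff_right
      obtain ⟨M, hM, hMv⟩ := combine hdisj g' hg' hg'inj hsurj hFC'
      exact hno M hM (by rw [hMv, Set.union_diff_cancel hS'U'])
    · push_neg at hsurj
      obtain ⟨K₀, hK₀, hmiss⟩ := hsurj
      have hodd' : ∀ K', IsComp G A K' → Odd K'.ncard := by
        intro K' hK'
        obtain ⟨x, hx⟩ := hK'.nonempty
        obtain ⟨M, hM, hMv⟩ := hFC' K' hK' x hx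
        haveI : Fintype ↥M.verts := (Set.toFinite M.verts).fintype
        have heven := hM.even_card
        have hncd : (K' \ {x}).ncard = K'.ncard - 1 := Set.ncard_diff_singleton_of_mem hx
        have h1 : 1 ≤ K'.ncard := (Set.ncard_pos (Set.toFinite _)).mpr hK'.nonempty
        have heq : Even ((K' \ {x}).ncard) := by
          rw [← hMv, Set.ncard_eq_toFinset_card']
          exact heven
        rw [Nat.even_iff] at heq
        rw [Nat.odd_iff]
        omega
      have hKodd : Odd K.ncard := hodd K hK
      have hU'even : Even U'.ncard := by
        rw [hU', Set.ncard_diff_singleton_of_mem hv]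
        rw [Nat.odd_iff] at hKodd
        rw [Nat.even_iff]
        have : 1 ≤ K.ncard := (Set.ncard_pos (Set.toFinite _)).mpr hK.nonempty
        omega
      have hAcard : A.ncard = U'.ncard - S'.ncard := Set.ncard_diff hS'U' (Set.toFinite _)
      have hS'le : S'.ncard ≤ U'.ncard := Set.ncard_le_ncard hS'U' (Set.toFinite _)
      have hparA : Even (A.ncard + q G A) := parity_q A
      have hK₀odd : Odd K₀.ncard := hodd' K₀ hK₀
      have hK₀mem : K₀ ∈ {K' : Set V | IsComp G A K' ∧ Odd K'.ncard} := ⟨hK₀, hK₀odd⟩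
      have hq1 : 1 ≤ q G A := q_pos_of_odd_comp hK₀ hK₀odd
      have hinj : S'.ncard ≤ ({K' : Set V | IsComp G A K' ∧ Odd K'.ncard} \ {K₀}).ncard := by
        apply Set.ncard_le_ncard_of_injOn (fun s => comp G A (g' s))
        · intro s hs
          have hgs := (hg' s hs).2
          refine ⟨⟨⟨g' s, hgs, rfl⟩, hodd' _ ⟨g' s, hgs, rfl⟩⟩, ?_⟩
          simpa using hmiss s hs
        · intro s hs t ht h
          exact hg'inj s hs t ht h
      have hdiffcard : ({K' : Set V | IsComp G A K' ∧ Odd K'.ncard} \ {K₀}).ncard = q G A - 1 :=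
        Set.ncard_diff_singleton_of_mem hK₀mem
      have hq2 : S'.ncard + 2 ≤ q G A := by
        rw [hdiffcard] at hinj
        rw [Nat.even_iff] at hparA hU'even
        rw [Nat.odd_iff] at hKodd
        omega
      set T : Set V := S ∪ ({v} ∪ S') with hT
      have hvS'sub : {v} ∪ S' ⊆ K := by
        apply Set.union_subset
        · simpa using hv
        · exact fun x hx => (hS'U' hx).1
      have hTU : T ⊆ U := Set.union_subset hSU (Set.union_subset (by simpa using hvU)
        (fun x hx => hU'U (hS'U' hx)))
      have hUT : U \ T = (U \ S) \ ({v} ∪ S') := by rw [hT, ← Set.diff_diff]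
      have hKdiff : K \ ({v} ∪ S') = A := by rw [hA, hU', ← Set.diff_diff]
      have hq := q_sdiff (T := {v} ∪ S') hK hvS'sub
      rw [if_pos hKodd, hKdiff] at hq
      have hqS1 : 1 ≤ q G (U \ S) := q_pos_of_odd_comp hK hKodd
      have hvnS' : v ∉ S' := fun h => (hS'U' h).2 rfl
      have hS'disjS : Disjoint ({v} ∪ S') S := by
        rw [Set.disjoint_left]
        intro x hx
        rcases hx with hx | hx
        · rw [Set.mem_singleton_iff] at hx
          exact hx ▸ (hK.subset hv).2
        · exact ((hK.subset (hS'U' hx).1)).2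
      have hTcard : T.ncard = S.ncard + 1 + S'.ncard := by
        rw [hT, Set.ncard_union_eq (Disjoint.symm hS'disjS) (Set.toFinite _) (Set.toFinite _),
          Set.ncard_union_eq (by simpa using hvnS') (Set.toFinite _) (Set.toFinite _)]
        simp [Set.ncard_singleton]
        ring
      apply key T hTU
      · rw [hdefect]
        simp only
        rw [hUT, hq, hTcard]
        push_cast
        omega
      · left
        rw [hTcard]
        omega
  -- Claim 3 : Hall condition and the matching of S into distinct components
  refine ⟨S, hSU, hFC, ?_⟩
  set t : ↥S → Finset (Set V) := fun s =>
    Set.Finite.toFinset (Set.toFinite {K | IsComp G (U \ S) K ∧ ∃ y ∈ K, G.Adj ↑s y}) with ht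
  have hall : ∀ s : Finset ↥S, s.card ≤ (s.biUnion t).card := by
    intro s
    by_contra hlt
    push_neg at hlt
    set A₀ : Set V := Subtype.val '' (↑s : Set ↥S) with hA₀
    have hA₀S : A₀ ⊆ S := by rintro x ⟨y, hy, rfl⟩; exact y.2
    have hA₀card : A₀.ncard = s.card := by
      rw [hA₀, Set.ncard_image_of_injective _ Subtype.val_injective, Set.ncard_coe_finset]
    set T : Set V := S \ A₀ with hT
    have hTU : T ⊆ U := fun x hx => hSU hx.1
    have hUT : (U \ S) ⊆ U \ T := fun x hx => ⟨hx.1, fun h => hx.2 h.1⟩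
    have hUTeq : U \ T = (U \ S) ∪ A₀ := by
      ext x
      simp only [hT, Set.mem_diff, Set.mem_union]
      constructor
      · rintro ⟨hxU, hx⟩
        by_cases hxS : x ∈ S
        · right
          by_contra h
          exact hx ⟨hxS, h⟩
        · exact Or.inl ⟨hxU, hxS⟩
      · rintro (⟨hxU, hxS⟩ | hx)
        · exact ⟨hxU, fun h => hxS h.1⟩
        · exact ⟨hSU (hA₀S hx), fun h => h.2 hx⟩
    have hsurvive : ∀ K, IsComp G (U \ S) K → Odd K.ncard → K ∉ (s.biUnion t : Finset (Set V)) →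
        IsComp G (U \ T) K ∧ Odd K.ncard := by
      intro K hK hKodd hKbi
      have hnoadj : ∀ a ∈ A₀, ∀ y ∈ K, ¬ G.Adj a y := by
        rintro a ⟨a', ha', rfl⟩ y hy hadj
        apply hKbi
        rw [Finset.mem_biUnion]
        refine ⟨a', ha', ?_⟩
        rw [ht]
        simp only [Set.Finite.mem_toFinset, Set.mem_setOf_eq]
        exact ⟨hK, y, hy, hadj⟩
      obtain ⟨w, hw, rfl⟩ := hK
      refine ⟨⟨w, hUT hw, ?_⟩, hKodd⟩
      rw [comp_eq_of_closed hUT]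
      intro x hx y hy hadj
      rw [hUTeq] at hy
      rcases hy with hy | hy
      · have hxUS : x ∈ U \ S := comp_subset hw hx
        have := mem_comp_of_adj hxUS hy hadj
        rw [comp_eq_of_mem hx] at this
        exact this
      · exact absurd hadj.symm (hnoadj y hy x hx)
    have hsubcount : q G (U \ S) ≤
        ({K : Set V | IsComp G (U \ S) K ∧ Odd K.ncard} \ ↑(s.biUnion t)).ncard
          + (s.biUnion t).card := by
      have h1 : {K : Set V | IsComp G (U \ S) K ∧ Odd K.ncard}.ncard ≤
          (({K : Set V | IsComp G (U \ S) K ∧ Odd K.ncard} \ ↑(s.biUnion t))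
            ∪ ↑(s.biUnion t)).ncard := by
        apply Set.ncard_le_ncard _ (Set.toFinite _)
        intro k hk
        by_cases h : k ∈ (↑(s.biUnion t) : Set (Set V))
        · exact Or.inr h
        · exact Or.inl ⟨hk, h⟩
      have h2 := Set.ncard_union_le
        ({K : Set V | IsComp G (U \ S) K ∧ Odd K.ncard} \ ↑(s.biUnion t))
        (↑(s.biUnion t) : Set (Set V))
      rw [Set.ncard_coe_finset] at h2
      exact le_trans h1 h2
    have hmapped : ({K : Set V | IsComp G (U \ S) K ∧ Odd K.ncard} \ ↑(s.biUnion t)).ncard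
        ≤ q G (U \ T) := by
      apply Set.ncard_le_ncard _ (Set.toFinite _)
      rintro K ⟨⟨hK, hKodd⟩, hKbi⟩
      exact hsurvive K hK hKodd (fun h => hKbi (Finset.mem_coe.mpr h))
    have hScard : A₀.ncard ≤ S.ncard := Set.ncard_le_ncard hA₀S (Set.toFinite _)
    have hTcard : T.ncard = S.ncard - s.card := by
      rw [hT, Set.ncard_diff hA₀S (Set.toFinite _), hA₀card]
    have hsc : s.card ≤ S.ncard := hA₀card ▸ hScard
    have hkey2 : defect S < defect T := by
      rw [hdefect]
      simp only
      rw [hTcard]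
      omega
    exact key T hTU (le_of_lt hkey2) (Or.inr hkey2)
  obtain ⟨f0, hf0inj, hf0mem⟩ := (Finset.all_card_le_biUnion_card_iff_exists_injective t).mp hall
  have hf0 : ∀ s : ↥S, IsComp G (U \ S) (f0 s) ∧ ∃ y ∈ f0 s, G.Adj ↑s y := by
    intro s
    have := hf0mem s
    rw [ht] at this
    simpa using this
  choose y hymem hyadj using fun s => (hf0 s).2
  set g : V → V := fun x => if hx : x ∈ S then y ⟨x, hx⟩ else x with hg
  have hgs : ∀ (s : V) (hs : s ∈ S), g s = y ⟨s, hs⟩ := fun s hs => dif_pos hs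
  have hcompy : ∀ i : ↥S, comp G (U \ S) (y i) = f0 i := fun i =>
    ((hf0 i).1).comp_eq (hymem i)
  refine ⟨g, ?_, ?_⟩
  · intro s hs
    rw [hgs s hs]
    exact ⟨hyadj ⟨s, hs⟩, ((hf0 ⟨s, hs⟩).1).subset (hymem ⟨s, hs⟩)⟩
  · intro s hs u hu h
    rw [hgs s hs, hgs u hu, hcompy ⟨s, hs⟩, hcompy ⟨u, hu⟩] at h
    exact Subtype.mk_eq_mk.mp (hf0inj h)
lemma reachable_iff {A : Set V} (x y : ↥A) :
    (G.induce A).Reachable x y ↔ Relation.ReflTransGen (Rel G A) ↑x ↑y := by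
  constructor
  · rintro ⟨p⟩
    induction p with
    | nil => exact Relation.ReflTransGen.refl
    | @cons a b c h p ih =>
      exact Relation.ReflTransGen.head ⟨a.2, b.2, h⟩ ih
  · intro h
    have key : ∀ b : V, Relation.ReflTransGen (Rel G A) ↑x b →
        ∀ hb : b ∈ A, (G.induce A).Reachable x ⟨b, hb⟩ := by
      intro b hR
      induction hR with
      | refl => intro hb; rw [show (⟨(↑x : V), hb⟩ : ↥A) = x from Subtype.ext rfl]
      | @tail b c hab hbc ih =>
        intro hc
        have hb : b ∈ A := hbc.1
        refine (ih hb).trans (Adj.reachable ?_)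
        exact hbc.2.2
    exact key ↑y h y.2

lemma supp_eq {A : Set V} (c : (G.induce A).ConnectedComponent) (w : ↥A)
    (hw : w ∈ c.supp) : Subtype.val '' c.supp = comp G A ↑w := by
  ext x
  simp only [Set.mem_image]
  constructor
  · rintro ⟨z, hz, rfl⟩
    have : (G.induce A).Reachable z w := by
      rw [ConnectedComponent.mem_supp_iff] at hz hw
      exact ConnectedComponent.exact (hz.trans hw.symm)
    exact reach_symm ((reachable_iff z w).mp this)
  · intro hx
    have hxA : x ∈ A := comp_subset w.2 hx
    refine ⟨⟨x, hxA⟩, ?_, rfl⟩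
    rw [ConnectedComponent.mem_supp_iff, ← (ConnectedComponent.mem_supp_iff c w).mp hw]
    exact ConnectedComponent.sound ((reachable_iff _ _).mpr (reach_symm hx))

end GE

/-- A graph is factor-critical if deleting any vertex leaves a graph
with a perfect matching (formalized via a matching whose vertex set is
everything except that vertex). -/
def FactorCritical {W : Type*} (H : SimpleGraph W) : Prop :=
  ∀ v : W, ∃ M : H.Subgraph, M.IsMatching ∧ M.verts = {v}ᶜ

open GE in
theorem stmt_2 {V : Type*} [Fintype V] (G : SimpleGraph V) :
    ∃ S : Set V,
      (∀ c : (G.induce Sᶜ).ConnectedComponent,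
          FactorCritical ((G.induce Sᶜ).induce c.supp)) ∧
      ∃ f : V → V,
        (∀ s ∈ S, G.Adj s (f s)) ∧
        (∀ s ∈ S, f s ∉ S) ∧
        (∀ s ∈ S, ∀ s' ∈ S, s ≠ s' → f s ≠ f s') ∧
        (∀ s ∈ S, ∀ s' ∈ S, s ≠ s' →
          ∀ (h : f s ∈ Sᶜ) (h' : f s' ∈ Sᶜ),
            ¬ (G.induce Sᶜ).Reachable ⟨f s, h⟩ ⟨f s', h'⟩) := by
  classical
  obtain ⟨S, hSU, hFC, g, hg, hginj⟩ := relMain (G := G) (Set.univ : Set V).ncard Set.univ le_rfl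
  have hUS : Set.univ \ S = Sᶜ := (Set.compl_eq_univ_diff S).symm
  rw [hUS] at hFC hg hginj
  refine ⟨S, ?_, g, ?_, ?_, ?_, ?_⟩
  · -- factor-criticality
    intro c v
    have hv : (↑v : ↥Sᶜ) ∈ c.supp := v.2
    have hK : IsComp G Sᶜ (Subtype.val '' c.supp) :=
      ⟨↑(↑v : ↥Sᶜ), (↑v : ↥Sᶜ).2, supp_eq c ↑v hv⟩
    have hvK : (↑↑v : V) ∈ Subtype.val '' c.supp := ⟨↑v, hv, rfl⟩
    obtain ⟨M, hM, hMv⟩ := hFC _ hK _ hvK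
    have hMsub : M.verts ⊆ Subtype.val '' c.supp := by rw [hMv]; exact Set.diff_subset
    refine ⟨⟨{x | (↑↑x : V) ∈ M.verts}, fun x y => M.Adj ↑↑x ↑↑y, ?_, ?_, ?_⟩, ?_, ?_⟩
    · intro x y h
      exact M.adj_sub h
    · intro x y h
      exact M.edge_vert h
    · refine ⟨fun x y h => ?_⟩
      exact M.adj_symm h
    · -- matching
      intro x hx
      obtain ⟨w, hw1, hw2⟩ := hM hx
      have hwv : w ∈ M.verts := M.edge_vert (M.adj_symm hw1)
      obtain ⟨z, hz, rfl⟩ := hMsub hwv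
      refine ⟨⟨z, hz⟩, hw1, ?_⟩
      intro y' hy'
      have := hw2 _ hy'
      exact Subtype.ext (Subtype.ext this)
    · -- verts = {v}ᶜ
      ext x
      simp only [Set.mem_setOf_eq, hMv, Set.mem_diff, Set.mem_compl_iff,
        Set.mem_singleton_iff]
      constructor
      · rintro ⟨-, hne⟩ hxv
        exact hne (by rw [hxv])
      · intro hne
        refine ⟨⟨↑x, x.2, rfl⟩, fun h => hne ?_⟩
        exact Subtype.ext (Subtype.ext h)
  · exact fun s hs => (hg s hs).1
  · exact fun s hs => (hg s hs).2
  · intro s hs s' hs' hne heq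
    exact hne (hginj s hs s' hs' (by rw [heq]))
  · intro s hs s' hs' hne h h' hreach
    apply hne
    apply hginj s hs s' hs'
    have : Relation.ReflTransGen (Rel G Sᶜ) (g s) (g s') :=
      (reachable_iff (⟨g s, h⟩ : ↥Sᶜ) ⟨g s', h'⟩).mp hreach
    rw [← comp_eq_of_mem (reach_symm this)]
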